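/- Let ψ′(0+) > −∞ and suppose W is continuously differentiable on (0,∞). Let C_U, C_D ∈ ℝ satisfy C_U + C_D > 0, let f : ℝ → ℝ be continuous and piecewise continuously differentiable, set f̃(x) = f(x) + C_U q x and Λ(a,x) = C_D + C_U + φ_a(x; f̃′). Fix a* < b* with Λ(a*, b*) = 0 and suppose Λ(a*, x) ≥ 0 for every x ∈ [a*, b*]. Define v(x) = −C_U R(x−a*) + (f(a*)/q) Z(x−a*) − φ_{a*}(x; f) for x ≤ b*, and v(x) = v(b*) + C_D(x−b*) for x > b*. Then v′(x) = −C_U for x < a*, v′(x) = C_D − Λ(a*, x) for a* < x < b*, v′(x) = C_D for x > b*, and the right-derivative of v satisfies v′₊(x) ≤ C_D for every x ∈ ℝ. -/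

import Mathlib

open MeasureTheory Set Filter Topology
open intervalIntegral

noncomputable section

/-- The Laplace exponent of a spectrally negative Lévy process with data `(γ, σ, ν)`. -/
def psi (γ σ : ℝ) (ν : Measure ℝ) (s : ℝ) : ℝ :=
  γ * s + σ ^ 2 * s ^ 2 / 2 +
    ∫ z in Set.Iio (0 : ℝ), (Real.exp (s * z) - 1 - s * z * (if -1 < z then (1:ℝ) else 0)) ∂ν

/-- `Φ(q) = sup {λ ≥ 0 : ψ(λ) = q}`. -/
def PhiQ (γ σ : ℝ) (ν : Measure ℝ) (q : ℝ) : ℝ :=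
  sSup {l : ℝ | 0 ≤ l ∧ psi γ σ ν l = q}

/-- `Z^{(q)}(x) = 1 + q ∫₀ˣ W(y) dy`. -/
def Zfun (q : ℝ) (W : ℝ → ℝ) (x : ℝ) : ℝ := 1 + q * ∫ y in (0:ℝ)..x, W y

/-- `Z̄^{(q)}(x) = ∫₀ˣ Z(z) dz`. -/
def Zbar (q : ℝ) (W : ℝ → ℝ) (x : ℝ) : ℝ := ∫ z in (0:ℝ)..x, Zfun q W z

/-- `R^{(q)}(x) = Z̄(x) + ψ'(0+)/q`. -/
def Rfun (q psi'0 : ℝ) (W : ℝ → ℝ) (x : ℝ) : ℝ := Zbar q W x + psi'0 / q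

/-- `Ψ(s; h) = ∫_s^∞ e^{-Φ(q)(y-s)} h(y) dy`. -/
def PsiInt (Φq s : ℝ) (h : ℝ → ℝ) : ℝ := ∫ y in Set.Ioi s, Real.exp (-Φq * (y - s)) * h y

/-- `φ_s(x; h) = ∫_s^x W(x-y) h(y) dy`. -/
def phiInt (W : ℝ → ℝ) (s x : ℝ) (h : ℝ → ℝ) : ℝ := ∫ y in s..x, W (x - y) * h y

/-- Integrand of the nonlocal part of the generator `L`. -/
def genInt (h : ℝ → ℝ) (x z : ℝ) : ℝ :=
  h (x + z) - h x - deriv h x * z * (if -1 < z then (1:ℝ) else 0)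

/-- The generator `L` of the Lévy process, applied to a sufficiently smooth function. -/
def Lgen (γ σ : ℝ) (ν : Measure ℝ) (h : ℝ → ℝ) (x : ℝ) : ℝ :=
  γ * deriv h x + σ ^ 2 / 2 * deriv (deriv h) x + ∫ z in Set.Iio (0 : ℝ), genInt h x z ∂ν

/-- Candidate value function for two-sided singular control with barriers `a < b`:
`v(x) = -C_U R(x-a) + (f(a)/q) Z(x-a) - φ_a(x; f)` for `x ≤ b`, extended linearly with
slope `C_D` above `b`. -/
def vTS (q psi'0 C_U C_D a b : ℝ) (W f : ℝ → ℝ) (x : ℝ) : ℝ :=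
  if x ≤ b then
    -C_U * Rfun q psi'0 W (x - a) + f a / q * Zfun q W (x - a) - phiInt W a x f
  else
    (-C_U * Rfun q psi'0 W (b - a) + f a / q * Zfun q W (b - a) - phiInt W a b f)
      + C_D * (x - b)

namespace TSAux


variable {W : ℝ → ℝ}

def Vfun (W : ℝ → ℝ) (t : ℝ) : ℝ := ∫ u in (0:ℝ)..t, W u

lemma monoW (hW0 : ∀ x, 0 ≤ W x) (hWz : ∀ x < 0, W x = 0)
    (hWm : MonotoneOn W (Set.Ici 0)) : Monotone W := by
  intro x y hxy
  rcases lt_or_ge x 0 with hx | hx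
  · rw [hWz x hx]; exact hW0 y
  · exact hWm hx (hx.trans hxy) hxy

lemma Wii (hWm : Monotone W) : ∀ c d : ℝ, IntervalIntegrable W volume c d :=
  fun _ _ => hWm.intervalIntegrable

lemma Vcont (hWm : Monotone W) : Continuous (Vfun W) :=
  intervalIntegral.continuous_primitive (Wii hWm) 0

lemma ae_ne_pt (c : ℝ) : ∀ᵐ u : ℝ, u ≠ c := by
  rw [ae_iff]
  simpa using measure_singleton (α := ℝ) c

lemma Vzero (hWz : ∀ x < 0, W x = 0) {t : ℝ} (ht : t ≤ 0) : Vfun W t = 0 := by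
  have h : ∀ᵐ u : ℝ, u ∈ Set.uIoc (0:ℝ) t → W u = (fun _ => (0:ℝ)) u := by
    filter_upwards [ae_ne_pt 0] with u hu hmem
    rw [Set.uIoc_of_ge ht] at hmem
    exact hWz u (lt_of_le_of_ne hmem.2 hu)
  rw [Vfun, intervalIntegral.integral_congr_ae h]
  simp

lemma Vsub (hWm : Monotone W) (α β : ℝ) :
    Vfun W β - Vfun W α = ∫ u in α..β, W u := by
  rw [Vfun, Vfun, intervalIntegral.integral_interval_sub_left (Wii hWm 0 β) (Wii hWm 0 α)]

lemma Vlip (hWm : Monotone W) {α β c : ℝ} (hab : α ≤ β) (hc : β ≤ c) :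
    Vfun W β - Vfun W α ≤ W c * (β - α) := by
  rw [Vsub hWm]
  calc ∫ u in α..β, W u ≤ ∫ _u in α..β, W c := by
        apply intervalIntegral.integral_mono_on hab (Wii hWm α β) intervalIntegrable_const
        intro u hu; exact hWm (hu.2.trans hc)
    _ = W c * (β - α) := by simp [mul_comm]

lemma Vmono (hWm : Monotone W) (hW0 : ∀ x, 0 ≤ W x) : Monotone (Vfun W) := by
  intro α β h
  have := intervalIntegral.integral_nonneg (μ := volume) h (fun u _ => hW0 u)
  rw [← Vsub hWm] at this; linarith

lemma Vnonneg (hWm : Monotone W) (hW0 : ∀ x, 0 ≤ W x) (hWz : ∀ x < 0, W x = 0) (t : ℝ) :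
    0 ≤ Vfun W t := by
  rcases le_or_gt t 0 with h | h
  · rw [Vzero hWz h]
  · rw [← Vzero hWz (le_refl (0:ℝ))]
    exact Vmono hWm hW0 h.le

lemma VlipAbs (hWm : Monotone W) (hW0 : ∀ x, 0 ≤ W x) {s₁ s₂ c : ℝ}
    (h1 : s₁ ≤ c) (h2 : s₂ ≤ c) : |Vfun W s₁ - Vfun W s₂| ≤ W c * |s₁ - s₂| := by
  rcases le_total s₂ s₁ with h | h
  · rw [abs_of_nonneg (by linarith [Vmono hWm hW0 h] : (0:ℝ) ≤ Vfun W s₁ - Vfun W s₂),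
      abs_of_nonneg (by linarith : (0:ℝ) ≤ s₁ - s₂)]
    exact Vlip hWm h h1
  · rw [abs_sub_comm, abs_of_nonneg (by linarith [Vmono hWm hW0 h] : (0:ℝ) ≤ Vfun W s₂ - Vfun W s₁),
      abs_sub_comm s₁ s₂, abs_of_nonneg (by linarith : (0:ℝ) ≤ s₂ - s₁)]
    exact Vlip hWm h h2

lemma Wsm (hWm : Monotone W) : StronglyMeasurable W :=
  hWm.measurable.stronglyMeasurable

lemma Vdiff (hWm : Monotone W) (hWc : ContinuousOn W (Set.Ici 0)) {t : ℝ} (ht : 0 < t) :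
    HasDerivAt (Vfun W) (W t) t := by
  apply intervalIntegral.integral_hasDerivAt_right (Wii hWm 0 t)
    ⟨Set.univ, univ_mem, (Wsm hWm).aestronglyMeasurable⟩
  exact (hWc t (le_of_lt ht)).continuousAt (Ici_mem_nhds ht)

lemma VdiffR (hWm : Monotone W) (hWc : ContinuousOn W (Set.Ici 0)) :
    HasDerivWithinAt (Vfun W) (W 0) (Set.Ici 0) 0 := by
  apply intervalIntegral.integral_hasDerivWithinAt_right (t := Set.Ioi 0) (Wii hWm 0 0)
    ⟨Set.univ, univ_mem, (Wsm hWm).aestronglyMeasurable⟩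
  exact (hWc 0 Set.self_mem_Ici).mono Set.Ioi_subset_Ici_self



variable {W : ℝ → ℝ} {q : ℝ}

lemma Zfun_eq (q : ℝ) (W : ℝ → ℝ) (x : ℝ) : Zfun q W x = 1 + q * Vfun W x := rfl

lemma Zcont (hWm : Monotone W) : Continuous (Zfun q W) := by
  have h : Zfun q W = fun x => 1 + q * Vfun W x := rfl
  rw [h]
  exact continuous_const.add (continuous_const.mul (Vcont hWm))

lemma Zone (hWz : ∀ x < 0, W x = 0) {t : ℝ} (ht : t ≤ 0) : Zfun q W t = 1 := by
  rw [Zfun_eq, Vzero hWz ht, mul_zero, add_zero]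

lemma Zbar_hasDeriv (hWm : Monotone W) (t : ℝ) :
    HasDerivAt (Zbar q W) (Zfun q W t) t := by
  apply intervalIntegral.integral_hasDerivAt_right
    ((Zcont hWm).intervalIntegrable 0 t)
    ⟨Set.univ, univ_mem, (Zcont hWm).aestronglyMeasurable⟩
    (Zcont hWm).continuousAt

lemma Zbar_lin (hWz : ∀ x < 0, W x = 0) {t : ℝ} (ht : t ≤ 0) : Zbar q W t = t := by
  have h : ∀ u ∈ Set.uIcc (0:ℝ) t, Zfun q W u = (fun _ => (1:ℝ)) u := by
    intro u hu
    rw [Set.uIcc_of_ge ht] at hu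
    exact Zone hWz hu.2
  rw [Zbar, intervalIntegral.integral_congr h]
  simp

-- phiInt vanishes left of a
lemma phiInt_zero (hWz : ∀ x < 0, W x = 0) {h : ℝ → ℝ} {a x : ℝ} (hxa : x ≤ a) :
    phiInt W a x h = 0 := by
  rw [phiInt, intervalIntegral.integral_symm, intervalIntegral.integral_of_le hxa]
  have he : Set.EqOn (fun y => W (x - y) * h y) (fun _ => (0:ℝ)) (Set.Ioc x a) := by
    intro y hy
    have hlt : x - y < 0 := by have := hy.1; linarith
    show W (x - y) * h y = 0
    rw [hWz (x - y) hlt, zero_mul]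
  rw [setIntegral_congr_fun measurableSet_Ioc he, MeasureTheory.integral_zero, neg_zero]

-- integral of W(x-y) over a..x
lemma int_W_shift (a x : ℝ) : (∫ y in a..x, W (x - y)) = Vfun W (x - a) := by
  rw [intervalIntegral.integral_comp_sub_left (fun u => W u) x, sub_self, Vfun]

lemma phiInt_const (hWm : Monotone W) (a x c : ℝ) :
    phiInt W a x (fun _ => c) = c * Vfun W (x - a) := by
  rw [phiInt]
  have : ∀ y, W (x - y) * c = c * W (x - y) := fun y => mul_comm _ _
  simp only [this]
  rw [intervalIntegral.integral_const_mul, int_W_shift]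



lemma meas_f' {f f' : ℝ → ℝ} (hf : Continuous f)
    (hf' : ∀ x, HasDerivWithinAt f (f' x) (Set.Ici x) x) : Measurable f' := by
  have key : ∀ x, Tendsto (fun n : ℕ => (f (x + ((n:ℝ)+1)⁻¹) - f x) / ((n:ℝ)+1)⁻¹)
      atTop (𝓝 (f' x)) := by
    intro x
    have h1 : Tendsto (slope f x) (𝓝[Set.Ici x \ {x}] x) (𝓝 (f' x)) :=
      hasDerivWithinAt_iff_tendsto_slope.1 (hf' x)
    have hpos : ∀ n : ℕ, (0:ℝ) < ((n:ℝ)+1)⁻¹ := by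
      intro n; positivity
    have h2 : Tendsto (fun n : ℕ => x + ((n:ℝ)+1)⁻¹) atTop (𝓝[Set.Ici x \ {x}] x) := by
      apply tendsto_nhdsWithin_of_tendsto_nhds_of_eventually_within
      · have h0 : Tendsto (fun n : ℕ => ((n:ℝ)+1)⁻¹) atTop (𝓝 0) := by
          apply tendsto_inv_atTop_zero.comp
          exact tendsto_atTop_add_const_right _ 1 tendsto_natCast_atTop_atTop
        simpa using tendsto_const_nhds.add h0
      · filter_upwards with n
        refine ⟨by simp [(hpos n).le], ?_⟩
        simp only [Set.mem_singleton_iff]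
        intro hc
        nlinarith [hpos n, congrArg (fun y => y - x) hc]
    refine (h1.comp h2).congr (fun n => ?_)
    simp only [Function.comp_apply, slope_def_field]
    congr 1
    ring
  have hm : ∀ n : ℕ, Measurable (fun x => (f (x + ((n:ℝ)+1)⁻¹) - f x) / ((n:ℝ)+1)⁻¹) := by
    intro n
    exact ((hf.comp (continuous_id.add continuous_const)).sub hf).measurable.div_const _
  exact measurable_of_tendsto_metrizable hm (tendsto_pi_nhds.2 key)



variable {W f f' : ℝ → ℝ}

lemma Vf'_integrableOn (hWm : Monotone W) (hW0 : ∀ x, 0 ≤ W x) (hWz : ∀ x < 0, W x = 0)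
    {a x c d : ℝ} (hca : a ≤ c) (hcd : c ≤ d) (hdx : d ≤ x)
    (hint : IntegrableOn f' (Set.Ioc a x)) (z : ℝ) :
    IntegrableOn (fun t => Vfun W (z - t) * f' t) (Set.Ioc c d) := by
  apply Integrable.bdd_mul (c := Vfun W (z - c)) (hint.mono_set (Set.Ioc_subset_Ioc hca hdx))
    ((Vcont hWm).comp (continuous_const.sub continuous_id)).aestronglyMeasurable
  refine (ae_restrict_iff' measurableSet_Ioc).2 (Eventually.of_forall fun t ht => ?_)
  simp only [Function.comp_apply, id_eq, Pi.sub_apply]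
  rw [Real.norm_eq_abs, abs_of_nonneg (Vnonneg hWm hW0 hWz _)]
  exact Vmono hWm hW0 (by linarith [ht.1])

lemma Vf'_ii (hWm : Monotone W) (hW0 : ∀ x, 0 ≤ W x) (hWz : ∀ x < 0, W x = 0)
    {a x c d : ℝ} (hca : a ≤ min c d) (hdx : max c d ≤ x)
    (hint : IntegrableOn f' (Set.Ioc a x)) (z : ℝ) :
    IntervalIntegrable (fun t => Vfun W (z - t) * f' t) volume c d := by
  rw [intervalIntegrable_iff]
  have h : Set.uIoc c d = Set.Ioc (min c d) (max c d) := rfl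
  rw [h]
  exact Vf'_integrableOn hWm hW0 hWz hca min_le_max hdx hint z

lemma rep (hW0 : ∀ x, 0 ≤ W x) (hWz : ∀ x < 0, W x = 0) (hWm : Monotone W)
    (hWc : ContinuousOn W (Set.Ici 0))
    (hf : Continuous f) (hf' : ∀ x, HasDerivWithinAt f (f' x) (Set.Ici x) x)
    {a x : ℝ} (hax : a ≤ x) (hint : IntegrableOn f' (Set.Ioc a x)) :
    phiInt W a x f = f a * Vfun W (x - a) + ∫ t in a..x, Vfun W (x - t) * f' t := by
  set g : ℝ → ℝ := fun t => Vfun W (x - t) * (f t - f a) with hg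
  have hcont : ContinuousOn g (Set.Icc a x) :=
    (((Vcont hWm).comp (continuous_const.sub continuous_id)).mul
      (hf.sub continuous_const)).continuousOn
  have hderiv : ∀ t ∈ Set.Ioo a x,
      HasDerivWithinAt g (Vfun W (x - t) * f' t - W (x - t) * (f t - f a)) (Set.Ioi t) t := by
    intro t ht
    have h1 := Vdiff hWm hWc (show (0:ℝ) < x - t by linarith [ht.2])
    have h2 : HasDerivAt (fun s : ℝ => x - s) (-1) t := (hasDerivAt_id t).const_sub x
    have hV : HasDerivAt (fun s => Vfun W (x - s)) (-W (x - t)) t := by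
      have h3 := h1.comp t h2
      simpa [Function.comp_def] using h3
    have hfd : HasDerivWithinAt (fun s => f s - f a) (f' t) (Set.Ioi t) t :=
      ((hf' t).mono Set.Ioi_subset_Ici_self).sub_const _
    have h4 : HasDerivWithinAt (fun s => Vfun W (x - s) * (f s - f a)) _ (Set.Ioi t) t :=
      hV.hasDerivWithinAt.mul hfd
    convert h4 using 1
    ring
  have hii1 : IntervalIntegrable (fun t => Vfun W (x - t) * f' t) volume a x :=
    Vf'_ii hWm hW0 hWz (by simp [hax]) (by simp [hax]) hint x
  have hWxc : ContinuousOn (fun t => W (x - t)) (Set.uIcc a x) := by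
    apply hWc.comp (continuous_const.sub continuous_id).continuousOn
    intro t ht
    rw [Set.uIcc_of_le hax] at ht
    exact sub_nonneg.2 ht.2
  have hii2 : IntervalIntegrable (fun t => W (x - t) * (f t - f a)) volume a x :=
    (hWxc.mul (hf.sub continuous_const).continuousOn).intervalIntegrable
  have hftc := intervalIntegral.integral_eq_sub_of_hasDeriv_right_of_le hax hcont hderiv
    (hii1.sub hii2)
  have hgx : g x = 0 := by simp [hg, Vzero hWz (le_refl (0:ℝ)), sub_self]
  have hga : g a = 0 := by simp [hg]
  rw [hgx, hga, sub_zero, intervalIntegral.integral_sub hii1 hii2] at hftc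
  -- hftc : ∫ V f' - ∫ W (f - f a) = 0
  have hsplit : (∫ t in a..x, W (x - t) * (f t - f a))
      = phiInt W a x f - f a * Vfun W (x - a) := by
    have hii3 : IntervalIntegrable (fun t => W (x - t) * f t) volume a x :=
      (hWxc.mul hf.continuousOn).intervalIntegrable
    have hii4 : IntervalIntegrable (fun t => W (x - t) * f a) volume a x :=
      (hWxc.mul continuousOn_const).intervalIntegrable
    have : (fun t => W (x - t) * (f t - f a))
        = fun t => W (x - t) * f t - W (x - t) * f a := by
      funext t; ring
    rw [this, intervalIntegral.integral_sub hii3 hii4, ← phiInt_const (W := W) hWm a x (f a)]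
    rfl
  rw [hsplit] at hftc
  linarith [hftc]



variable {W f f' : ℝ → ℝ}

/-- Bound for the tail term: `|∫_{x₀}^x V(x-t) f'(t) dt| ≤ M |∫_{x₀}^x |f'||` for
`a ≤ x₀`, `x, x₀ ≤ x`... stated for `x₀, x ∈ (a, c]`, `c - a ≤ b - a`. -/
lemma tail_bound (hW0 : ∀ x, 0 ≤ W x) (hWz : ∀ x < 0, W x = 0) (hWm : Monotone W)
    (hm : Measurable f') {a b x₀ x : ℝ}
    (hax₀ : a ≤ x₀) (hax : a < x) (hx₀b : x₀ < b) (hxb : x < b)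
    (hint : ∀ z, z < b → IntegrableOn f' (Set.Ioc a z)) :
    |∫ t in x₀..x, Vfun W (x - t) * f' t| ≤
      W (b - a) * |x - x₀| * abs (∫ t in x₀..x, |f' t|) := by
  rcases le_total x₀ x with h | h
  · have hii1 : IntervalIntegrable (fun t => Vfun W (x - t) * f' t) volume x₀ x :=
      Vf'_ii hWm hW0 hWz (by simp [hax₀, hax.le]) (by simp [h]) (hint x hxb) x
    have hiiabs : IntervalIntegrable (fun t => |Vfun W (x - t) * f' t|) volume x₀ x := hii1.abs
    have hii2 : IntervalIntegrable (fun t => W (b - a) * (x - x₀) * |f' t|) volume x₀ x := by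
      apply IntervalIntegrable.const_mul
      rw [intervalIntegrable_iff_integrableOn_Ioc_of_le h]
      exact ((hint x hxb).mono_set (Set.Ioc_subset_Ioc hax₀ le_rfl)).norm
    calc |∫ t in x₀..x, Vfun W (x - t) * f' t|
        ≤ ∫ t in x₀..x, |Vfun W (x - t) * f' t| :=
          intervalIntegral.abs_integral_le_integral_abs h
      _ ≤ ∫ t in x₀..x, W (b - a) * (x - x₀) * |f' t| := by
          apply intervalIntegral.integral_mono_on h hiiabs hii2
          intro t ht
          rw [abs_mul]
          apply mul_le_mul_of_nonneg_right _ (abs_nonneg _)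
          rw [abs_of_nonneg (Vnonneg hWm hW0 hWz _)]
          have h1 : Vfun W (x - t) - Vfun W (x - x) ≤ W (b - a) * ((x - t) - (x - x)) := by
            apply Vlip hWm (by linarith [ht.2]) (by linarith [ht.1])
          rw [sub_self, Vzero hWz le_rfl] at h1
          have : W (b - a) * (x - t) ≤ W (b - a) * (x - x₀) := by
            apply mul_le_mul_of_nonneg_left _ (hW0 _)
            linarith [ht.1]
          linarith
      _ = W (b - a) * (x - x₀) * ∫ t in x₀..x, |f' t| := intervalIntegral.integral_const_mul _ _
      _ ≤ W (b - a) * |x - x₀| * abs (∫ t in x₀..x, |f' t|) := by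
          rw [abs_of_nonneg (by linarith : (0:ℝ) ≤ x - x₀)]
          apply mul_le_mul_of_nonneg_left (le_abs_self _)
          exact mul_nonneg (hW0 _) (by linarith)
  · -- x ≤ x₀ : the integrand vanishes on (x, x₀]
    have hz : (∫ t in x₀..x, Vfun W (x - t) * f' t) = 0 := by
      rw [intervalIntegral.integral_symm, intervalIntegral.integral_of_le h]
      have he : Set.EqOn (fun t => Vfun W (x - t) * f' t) (fun _ => (0:ℝ)) (Set.Ioc x x₀) := by
        intro t ht
        show Vfun W (x - t) * f' t = 0
        rw [Vzero hWz (by linarith [ht.1] : x - t ≤ 0), zero_mul]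
      rw [setIntegral_congr_fun measurableSet_Ioc he, MeasureTheory.integral_zero, neg_zero]
    rw [hz, abs_zero]
    exact mul_nonneg (mul_nonneg (hW0 _) (abs_nonneg _)) (abs_nonneg _)

lemma Hfun_deriv (hW0 : ∀ x, 0 ≤ W x) (hWz : ∀ x < 0, W x = 0) (hWm : Monotone W)
    (hWc : ContinuousOn W (Set.Ici 0)) (hm : Measurable f') {a b x₀ : ℝ}
    (hx₀ : x₀ ∈ Set.Ioo a b)
    (hint : ∀ z, z < b → IntegrableOn f' (Set.Ioc a z)) :
    HasDerivAt (fun x => ∫ t in a..x, Vfun W (x - t) * f' t)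
      (∫ t in a..x₀, W (x₀ - t) * f' t) x₀ := by
  obtain ⟨hax₀, hx₀b⟩ := hx₀
  set c : ℝ := (x₀ + b) / 2 with hc
  have hx₀c : x₀ < c := by simp only [hc]; linarith
  have hcb : c < b := by simp only [hc]; linarith
  set M : ℝ := W (b - a) with hM
  set H : ℝ → ℝ := fun x => ∫ t in a..x, Vfun W (x - t) * f' t with hH
  -- the A part
  have hAlim : Tendsto
      (fun x => ∫ t in a..x₀, ((x - x₀)⁻¹ * (Vfun W (x - t) - Vfun W (x₀ - t))) * f' t)
      (𝓝[≠] x₀) (𝓝 (∫ t in a..x₀, W (x₀ - t) * f' t)) := by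
    apply intervalIntegral.tendsto_integral_filter_of_dominated_convergence
      (bound := fun t => M * |f' t|)
    · filter_upwards with x
      have hVc := Vcont hWm
      have hc1 : Continuous fun t : ℝ => (x - x₀)⁻¹ * (Vfun W (x - t) - Vfun W (x₀ - t)) :=
        continuous_const.mul ((hVc.comp (continuous_const.sub continuous_id)).sub
          (hVc.comp (continuous_const.sub continuous_id)))
      exact hc1.aestronglyMeasurable.mul hm.aestronglyMeasurable
    · have hmem : ∀ᶠ x in 𝓝[≠] x₀, x ∈ Set.Iio b ∩ {x₀}ᶜ := by
        apply Filter.inter_mem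
        · exact mem_nhdsWithin_of_mem_nhds (Iio_mem_nhds hx₀b)
        · exact self_mem_nhdsWithin
      filter_upwards [hmem] with x hx
      apply Eventually.of_forall
      intro t ht
      rw [Set.uIoc_of_le hax₀.le] at ht
      have hne : x - x₀ ≠ 0 := sub_ne_zero.2 (fun hcon => hx.2 (by simp [hcon]))
      rw [Real.norm_eq_abs, abs_mul, abs_mul, abs_inv]
      have hlip : |Vfun W (x - t) - Vfun W (x₀ - t)| ≤ M * |x - x₀| := by
        have := VlipAbs hWm hW0 (c := b - a)
          (by have := Set.mem_Iio.1 hx.1; linarith [ht.1] : x - t ≤ b - a)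
          (by linarith [ht.1] : x₀ - t ≤ b - a)
        calc |Vfun W (x - t) - Vfun W (x₀ - t)| ≤ W (b - a) * |(x - t) - (x₀ - t)| := this
          _ = M * |x - x₀| := by rw [hM]; congr 1; congr 1; ring
      calc |x - x₀|⁻¹ * |Vfun W (x - t) - Vfun W (x₀ - t)| * |f' t|
          ≤ |x - x₀|⁻¹ * (M * |x - x₀|) * |f' t| := by
            apply mul_le_mul_of_nonneg_right _ (abs_nonneg _)
            exact mul_le_mul_of_nonneg_left hlip (by positivity)
        _ = M * |f' t| := by
            field_simp
    · rw [intervalIntegrable_iff_integrableOn_Ioc_of_le hax₀.le]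
      exact ((hint x₀ hx₀b).norm.const_mul M)
    · filter_upwards [ae_ne_pt x₀] with t htne
      intro ht
      rw [Set.uIoc_of_le hax₀.le] at ht
      have htx₀ : t < x₀ := lt_of_le_of_ne ht.2 htne
      have h1 : HasDerivAt (fun x => Vfun W (x - t)) (W (x₀ - t)) x₀ := by
        have := (Vdiff hWm hWc (by linarith : (0:ℝ) < x₀ - t)).comp x₀
          ((hasDerivAt_id x₀).sub_const t)
        simpa [Function.comp_def] using this
      have h2 := (hasDerivAt_iff_tendsto_slope.1 h1).mul_const (f' t)
      apply h2.congr
      intro x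
      rw [slope_def_field, div_eq_inv_mul]
  -- continuity of the primitive of |f'| at x₀
  have hac : a ≤ c := by linarith
  have hf'c : IntervalIntegrable (fun t => |f' t|) volume a c := by
    rw [intervalIntegrable_iff_integrableOn_Ioc_of_le hac]
    exact (hint c hcb).norm
  have hx₀mem : x₀ ∈ Set.uIcc a c := by
    rw [Set.uIcc_of_le hac]; exact ⟨hax₀.le, hx₀c.le⟩
  have hRcont : Tendsto (fun x => ∫ t in x₀..x, |f' t|) (𝓝 x₀) (𝓝 0) := by
    have hco := intervalIntegral.continuousOn_primitive_interval' hf'c hx₀mem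
    have h1 : ContinuousAt (fun x => ∫ t in x₀..x, |f' t|) x₀ := by
      apply hco.continuousAt
      rw [Set.uIcc_of_le hac]
      exact Icc_mem_nhds hax₀ hx₀c
    have h2 := h1.tendsto
    simpa [intervalIntegral.integral_same] using h2
  have hBlim : Tendsto (fun x => (x - x₀)⁻¹ * ∫ t in x₀..x, Vfun W (x - t) * f' t)
      (𝓝[≠] x₀) (𝓝 0) := by
    refine squeeze_zero_norm' (a := fun x => M * abs (∫ t in x₀..x, |f' t|)) ?_ ?_
    · have hmem : ∀ᶠ x in 𝓝[≠] x₀, x ∈ Set.Ioo a b ∩ {x₀}ᶜ := by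
        apply Filter.inter_mem
        · exact mem_nhdsWithin_of_mem_nhds (Ioo_mem_nhds hax₀ hx₀b)
        · exact self_mem_nhdsWithin
      filter_upwards [hmem] with x hx
      have hxx₀ : x - x₀ ≠ 0 := sub_ne_zero.2 (fun h => hx.2 (by simp [h]))
      have htb := tail_bound hW0 hWz hWm hm hax₀.le hx.1.1 hx₀b hx.1.2 hint
      rw [Real.norm_eq_abs, abs_mul, abs_inv]
      calc |x - x₀|⁻¹ * |∫ t in x₀..x, Vfun W (x - t) * f' t|
          ≤ |x - x₀|⁻¹ * (W (b - a) * |x - x₀| * abs (∫ t in x₀..x, |f' t|)) := by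
            apply mul_le_mul_of_nonneg_left htb (by positivity)
        _ = M * abs (∫ t in x₀..x, |f' t|) := by
            rw [hM]
            field_simp
            try ring
    · have h3 := hRcont.abs.const_mul M
      simp only [abs_zero, mul_zero] at h3
      exact h3.mono_left nhdsWithin_le_nhds
  have hsplit : ∀ᶠ x in 𝓝[≠] x₀, slope H x₀ x
      = (∫ t in a..x₀, ((x - x₀)⁻¹ * (Vfun W (x - t) - Vfun W (x₀ - t))) * f' t)
        + (x - x₀)⁻¹ * ∫ t in x₀..x, Vfun W (x - t) * f' t := by
    have hmem : ∀ᶠ x in 𝓝[≠] x₀, x ∈ Set.Ioo a c ∩ {x₀}ᶜ := by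
      apply Filter.inter_mem
      · exact mem_nhdsWithin_of_mem_nhds (Ioo_mem_nhds hax₀ hx₀c)
      · exact self_mem_nhdsWithin
    filter_upwards [hmem] with x hx
    have hax : a < x := hx.1.1
    have hxc : x < c := hx.1.2
    have hxx₀ : x - x₀ ≠ 0 := sub_ne_zero.2 (fun h => hx.2 (by simp [h]))
    have hii0 : IntervalIntegrable (fun t => Vfun W (x - t) * f' t) volume a x₀ :=
      Vf'_ii hWm hW0 hWz (le_min le_rfl hax₀.le) (max_le hac hx₀c.le) (hint c hcb) x
    have hii1 : IntervalIntegrable (fun t => Vfun W (x - t) * f' t) volume x₀ x :=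
      Vf'_ii hWm hW0 hWz (le_min hax₀.le hax.le) (max_le hx₀c.le hxc.le) (hint c hcb) x
    have hii2 : IntervalIntegrable (fun t => Vfun W (x₀ - t) * f' t) volume a x₀ :=
      Vf'_ii hWm hW0 hWz (le_min le_rfl hax₀.le) (max_le hac hx₀c.le) (hint c hcb) x₀
    have hadd := intervalIntegral.integral_add_adjacent_intervals hii0 hii1
    have hHx : H x = (∫ t in a..x₀, Vfun W (x - t) * f' t)
        + ∫ t in x₀..x, Vfun W (x - t) * f' t := hadd.symm
    have hHx₀ : H x₀ = ∫ t in a..x₀, Vfun W (x₀ - t) * f' t := rfl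
    have hs2 : (∫ t in a..x₀, ((x - x₀)⁻¹ * (Vfun W (x - t) - Vfun W (x₀ - t))) * f' t)
        = (x - x₀)⁻¹ * ((∫ t in a..x₀, Vfun W (x - t) * f' t)
            - ∫ t in a..x₀, Vfun W (x₀ - t) * f' t) := by
      rw [← intervalIntegral.integral_sub hii0 hii2, ← intervalIntegral.integral_const_mul]
      congr 1
      funext t
      ring
    rw [slope_def_field, hHx, hHx₀, hs2]
    field_simp
    ring
  have hfin := hAlim.add hBlim
  rw [add_zero] at hfin
  have heq : (fun x => (∫ t in a..x₀, ((x - x₀)⁻¹ * (Vfun W (x - t) - Vfun W (x₀ - t))) * f' t)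
      + (x - x₀)⁻¹ * ∫ t in x₀..x, Vfun W (x - t) * f' t) =ᶠ[𝓝[≠] x₀] slope H x₀ :=
    hsplit.mono fun x hx => hx.symm
  exact hasDerivAt_iff_tendsto_slope.2 (hfin.congr' heq)



variable {W f f' : ℝ → ℝ}

lemma Hfun_derivR (hW0 : ∀ x, 0 ≤ W x) (hWz : ∀ x < 0, W x = 0) (hWm : Monotone W)
    (hm : Measurable f') {a b : ℝ} (hab : a < b)
    (hint : ∀ z, z < b → IntegrableOn f' (Set.Ioc a z)) :
    HasDerivWithinAt (fun x => ∫ t in a..x, Vfun W (x - t) * f' t) 0 (Set.Ici a) a := by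
  set c : ℝ := (a + b) / 2 with hc
  have hac : a < c := by simp only [hc]; linarith
  have hcb : c < b := by simp only [hc]; linarith
  rw [hasDerivWithinAt_iff_tendsto_slope]
  have hf'c : IntervalIntegrable (fun t => |f' t|) volume a c := by
    rw [intervalIntegrable_iff_integrableOn_Ioc_of_le hac.le]
    exact (hint c hcb).norm
  have hR : Tendsto (fun x => ∫ t in a..x, |f' t|) (𝓝[Set.Ici a \ {a}] a) (𝓝 0) := by
    have hco := intervalIntegral.continuousOn_primitive_interval' hf'c left_mem_uIcc
    have h1 : ContinuousWithinAt (fun x => ∫ t in a..x, |f' t|) (Set.uIcc a c) a :=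
      hco a left_mem_uIcc
    have hle : 𝓝[Set.Ici a \ {a}] a ≤ 𝓝[Set.uIcc a c] a := by
      rw [nhdsWithin_le_iff]
      have h2 : Set.Iic c ∈ 𝓝[Set.Ici a \ {a}] a :=
        mem_nhdsWithin_of_mem_nhds (Iic_mem_nhds hac)
      apply mem_of_superset (Filter.inter_mem h2 self_mem_nhdsWithin)
      intro y hy
      rw [Set.uIcc_of_le hac.le]
      exact ⟨hy.2.1, hy.1⟩
    have h3 := h1.tendsto.mono_left hle
    simpa [intervalIntegral.integral_same] using h3
  apply squeeze_zero_norm' (a := fun x => W (b - a) * abs (∫ t in a..x, |f' t|)) ?_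
  · have h4 := hR.abs.const_mul (W (b - a))
    simpa using h4
  · have hmem : Set.Iio b ∈ 𝓝[Set.Ici a \ {a}] a := mem_nhdsWithin_of_mem_nhds (Iio_mem_nhds hab)
    filter_upwards [hmem, self_mem_nhdsWithin] with x hxb hx
    have hax : a < x := lt_of_le_of_ne hx.1 (fun h => hx.2 h.symm)
    have htb := tail_bound hW0 hWz hWm hm (le_refl a) hax hab hxb hint
    rw [slope_def_field, intervalIntegral.integral_same, sub_zero, Real.norm_eq_abs, abs_div]
    rw [div_le_iff₀ (by rw [abs_of_pos (by linarith : (0:ℝ) < x - a)]; linarith)]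
    calc |∫ t in a..x, Vfun W (x - t) * f' t|
        ≤ W (b - a) * |x - a| * abs (∫ t in a..x, |f' t|) := htb
      _ = W (b - a) * abs (∫ t in a..x, |f' t|) * |x - a| := by ring

lemma phiInt_split (hW0 : ∀ x, 0 ≤ W x) (hWm : Monotone W) {a x : ℝ} (hax : a ≤ x)
    (hm : Measurable f') (hint : IntegrableOn f' (Set.Ioc a x)) (cst : ℝ) :
    phiInt W a x (fun y => f' y + cst) = phiInt W a x f' + cst * Vfun W (x - a) := by
  have hWmeas : AEStronglyMeasurable (fun y => W (x - y))
      (volume.restrict (Set.Ioc a x)) :=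
    (hWm.measurable.comp (measurable_const.sub measurable_id)).aestronglyMeasurable
  have h1 : IntervalIntegrable (fun y => W (x - y) * f' y) volume a x := by
    rw [intervalIntegrable_iff_integrableOn_Ioc_of_le hax]
    apply Integrable.bdd_mul (c := W (x - a)) hint hWmeas
    refine (ae_restrict_iff' measurableSet_Ioc).2 (Eventually.of_forall fun t ht => ?_)
    rw [Real.norm_eq_abs, abs_of_nonneg (hW0 _)]
    exact hWm (by linarith [ht.1])
  have h2 : IntervalIntegrable (fun y => W (x - y) * cst) volume a x := by
    rw [intervalIntegrable_iff_integrableOn_Ioc_of_le hax]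
    apply Integrable.bdd_mul (c := W (x - a))
      (integrableOn_const (C := cst) measure_Ioc_lt_top.ne) hWmeas
    refine (ae_restrict_iff' measurableSet_Ioc).2 (Eventually.of_forall fun t ht => ?_)
    rw [Real.norm_eq_abs, abs_of_nonneg (hW0 _)]
    exact hWm (by linarith [ht.1])
  have h3 : (fun y => W (x - y) * (f' y + cst))
      = fun y => W (x - y) * f' y + W (x - y) * cst := by
    funext y; ring
  rw [phiInt, h3, intervalIntegral.integral_add h1 h2]
  congr 1
  rw [← phiInt_const (W := W) hWm a x cst]
  rfl

/-- transfer of `HasDerivAt` through the shift `x ↦ x - a`. -/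
lemma shift_deriv {g : ℝ → ℝ} {d a x : ℝ} (h : HasDerivAt g d (x - a)) :
    HasDerivAt (fun y => g (y - a)) d x := by
  have := h.comp x ((hasDerivAt_id x).sub_const a)
  simpa [Function.comp_def] using this

lemma shift_derivR {g : ℝ → ℝ} {d a : ℝ} (h : HasDerivWithinAt g d (Set.Ici 0) 0) :
    HasDerivWithinAt (fun y => g (y - a)) d (Set.Ici a) a := by
  have h2 : HasDerivWithinAt (fun y : ℝ => y - a) 1 (Set.Ici a) a :=
    ((hasDerivAt_id a).sub_const a).hasDerivWithinAt
  have h3 : Set.MapsTo (fun y : ℝ => y - a) (Set.Ici a) (Set.Ici 0) := by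
    intro y hy
    simp only [Set.mem_Ici] at *
    linarith
  have := h.comp_of_eq a h2 h3 (by simp)
  simpa [Function.comp_def] using this


end TSAux

theorem stmt2
    (γ σ q : ℝ) (ν : Measure ℝ) (W : ℝ → ℝ)
    (hσ : 0 ≤ σ)
    (hνconc : ν (Set.Ici 0) = 0)
    (hνint : Integrable (fun z => min 1 (z ^ 2)) ν)
    (hψtop : Tendsto (psi γ σ ν) atTop atTop)
    (hq : 0 < q)
    (hΦpos : 0 < PhiQ γ σ ν q)
    (hWnonneg : ∀ x, 0 ≤ W x)
    (hWzero : ∀ x < 0, W x = 0)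
    (hWcont : ContinuousOn W (Set.Ici 0))
    (hWmono : StrictMonoOn W (Set.Ici 0))
    (hWlaplace : ∀ s, PhiQ γ σ ν q < s →
      ∫ x in Set.Ioi (0:ℝ), Real.exp (-s * x) * W x = 1 / (psi γ σ ν s - q))
    (psi'0 : ℝ) (hpsi'0 : HasDerivWithinAt (psi γ σ ν) psi'0 (Set.Ici 0) 0)
    (hW1 : ContDiffOn ℝ 1 W (Set.Ioi 0))
    (C_U C_D : ℝ) (hC : 0 < C_U + C_D)
    (f f' : ℝ → ℝ) (hf : Continuous f)
    (hf' : ∀ x, HasDerivWithinAt f (f' x) (Set.Ici x) x)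
    (a b : ℝ) (hab : a < b)
    (hΛzero : C_D + C_U + phiInt W a b (fun y => f' y + C_U * q) = 0)
    (hΛnonneg : ∀ x ∈ Set.Icc a b,
      0 ≤ C_D + C_U + phiInt W a x (fun y => f' y + C_U * q)) :
    (∀ x < a, HasDerivAt (vTS q psi'0 C_U C_D a b W f) (-C_U) x) ∧
    (∀ x, a < x → x < b →
      HasDerivAt (vTS q psi'0 C_U C_D a b W f)
        (C_D - (C_D + C_U + phiInt W a x (fun y => f' y + C_U * q))) x) ∧
    (∀ x, b < x → HasDerivAt (vTS q psi'0 C_U C_D a b W f) C_D x) ∧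
    (∀ x : ℝ, ∃ d, HasDerivWithinAt (vTS q psi'0 C_U C_D a b W f) d (Set.Ici x) x ∧
      d ≤ C_D) := by
  have hWm : Monotone W := TSAux.monoW hWnonneg hWzero hWmono.monotoneOn
  set v : ℝ → ℝ := vTS q psi'0 C_U C_D a b W f with hv
  set Hf : ℝ → ℝ := fun x => ∫ t in a..x, TSAux.Vfun W (x - t) * f' t with hHf
  have hm : Measurable f' := TSAux.meas_f' hf hf'
  -- integrability of the Λ integrand up to b
  have kb : IntegrableOn (fun y => W (b - y) * (f' y + C_U * q)) (Set.Ioc a b) := by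
    by_contra hni
    have h0 : phiInt W a b (fun y => f' y + C_U * q) = 0 := by
      rw [phiInt, intervalIntegral.integral_of_le hab.le]
      exact integral_undef hni
    rw [h0] at hΛzero
    linarith
  have hf'int : ∀ z, z < b → IntegrableOn f' (Set.Ioc a z) := by
    intro z hzb
    rcases le_or_gt z a with hza | haz
    · rw [Set.Ioc_eq_empty (by exact fun h => absurd h (not_lt.2 hza))]
      exact integrableOn_empty
    · have hWpos : 0 < W (b - z) := by
        have h1 : W 0 < W (b - z) :=
          hWmono Set.self_mem_Ici (by simp only [Set.mem_Ici]; linarith) (by linarith)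
        linarith [hWnonneg 0]
      apply Integrable.mono'
        (g := fun y => (W (b - z))⁻¹ * |W (b - y) * (f' y + C_U * q)| + |C_U * q|)
      · apply Integrable.add
        · exact ((kb.mono_set (Set.Ioc_subset_Ioc le_rfl hzb.le)).norm.const_mul _)
        · exact integrableOn_const measure_Ioc_lt_top.ne
      · exact hm.aestronglyMeasurable.restrict
      · refine (ae_restrict_iff' measurableSet_Ioc).2 (Eventually.of_forall fun t ht => ?_)
        rw [Real.norm_eq_abs]
        have h2 : W (b - z) ≤ W (b - t) := hWm (by linarith [ht.2])
        have h3 : |f' t| ≤ |f' t + C_U * q| + |C_U * q| := by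
          have h5 := abs_add_le (f' t + C_U * q) (-(C_U * q))
          simpa using h5
        have h4 : |f' t + C_U * q| ≤ (W (b - z))⁻¹ * |W (b - t) * (f' t + C_U * q)| := by
          rw [abs_mul, abs_of_nonneg (hWnonneg _), le_inv_mul_iff₀ hWpos]
          exact mul_le_mul_of_nonneg_right h2 (abs_nonneg _)
        linarith
  -- representation on [a, b)
  have hrep : ∀ x, a ≤ x → x < b →
      phiInt W a x f = f a * TSAux.Vfun W (x - a) + Hf x := fun x hax hxb =>
    TSAux.rep hWnonneg hWzero hWm hWcont hf hf' hax (hf'int x hxb)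
  -- the auxiliary smooth representative u
  set u : ℝ → ℝ := fun x => -C_U * (Zbar q W (x - a) + psi'0 / q) + f a / q * Zfun q W (x - a)
      - (f a * TSAux.Vfun W (x - a) + Hf x) with hu
  have hveq : ∀ x, a ≤ x → x < b → v x = u x := by
    intro x hax hxb
    rw [hv]
    show vTS q psi'0 C_U C_D a b W f x = u x
    rw [vTS, if_pos (le_of_lt hxb), hu]
    simp only [Rfun]
    rw [hrep x hax hxb]
  -- derivative of u at interior points
  have huder : ∀ x ∈ Set.Ioo a b,
      HasDerivAt u (-C_U * Zfun q W (x - a) - phiInt W a x f') x := by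
    intro x hx
    have h1 : HasDerivAt (fun y => Zbar q W (y - a)) (Zfun q W (x - a)) x :=
      TSAux.shift_deriv (TSAux.Zbar_hasDeriv hWm _)
    have hVd : HasDerivAt (fun y => TSAux.Vfun W (y - a)) (W (x - a)) x :=
      TSAux.shift_deriv (TSAux.Vdiff hWm hWcont (by linarith [hx.1]))
    have h2 : HasDerivAt (fun y => Zfun q W (y - a)) (q * W (x - a)) x := by
      have h3 : (fun y => Zfun q W (y - a)) = fun y => 1 + q * TSAux.Vfun W (y - a) := rfl
      rw [h3]
      simpa using (hVd.const_mul q).const_add 1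
    have h4 : HasDerivAt Hf (phiInt W a x f') x :=
      TSAux.Hfun_deriv hWnonneg hWzero hWm hWcont hm hx hf'int
    have h6 : HasDerivAt u (-C_U * Zfun q W (x - a) + f a / q * (q * W (x - a))
        - (f a * W (x - a) + phiInt W a x f')) x := by
      apply HasDerivAt.sub
      · exact ((h1.add_const (psi'0 / q)).const_mul (-C_U)).add (h2.const_mul (f a / q))
      · exact (hVd.const_mul (f a)).add h4
    convert h6 using 1
    field_simp
    ring
  -- part 1
  have hlin : ∀ y, y ≤ a → v y = -C_U * ((y - a) + psi'0 / q) + f a / q := by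
    intro y hy
    rw [hv]
    show vTS q psi'0 C_U C_D a b W f y = _
    rw [vTS, if_pos (by linarith : y ≤ b), Rfun,
      TSAux.Zbar_lin hWzero (by linarith : y - a ≤ 0),
      TSAux.Zone hWzero (by linarith : y - a ≤ 0), TSAux.phiInt_zero hWzero hy]
    ring
  have part1 : ∀ x < a, HasDerivAt v (-C_U) x := by
    intro x hx
    have hd : HasDerivAt (fun y : ℝ => -C_U * ((y - a) + psi'0 / q) + f a / q) (-C_U) x := by
      have h1 := ((((hasDerivAt_id x).sub_const a).add_const (psi'0 / q)).const_mul
        (-C_U)).add_const (f a / q)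
      simpa using h1
    apply hd.congr_of_eventuallyEq
    filter_upwards [Iio_mem_nhds hx] with y hy
    exact hlin y (le_of_lt hy)
  -- part 2
  have part2 : ∀ x, a < x → x < b → HasDerivAt v
      (C_D - (C_D + C_U + phiInt W a x (fun y => f' y + C_U * q))) x := by
    intro x hax hxb
    have hsp := TSAux.phiInt_split (f' := f') hWnonneg hWm hax.le hm (hf'int x hxb) (C_U * q)
    have hd := huder x ⟨hax, hxb⟩
    have heq : v =ᶠ[𝓝 x] u := by
      filter_upwards [Ioo_mem_nhds hax hxb] with y hy
      exact hveq y hy.1.le hy.2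
    have hD : (-C_U * Zfun q W (x - a) - phiInt W a x f')
        = C_D - (C_D + C_U + phiInt W a x (fun y => f' y + C_U * q)) := by
      rw [hsp, TSAux.Zfun_eq]
      ring
    exact hD ▸ (hd.congr_of_eventuallyEq heq)
  -- part 3
  have hKb : ∀ y, b < y → v y = v b + C_D * (y - b) := by
    intro y hy
    rw [hv]
    show vTS q psi'0 C_U C_D a b W f y = vTS q psi'0 C_U C_D a b W f b + C_D * (y - b)
    rw [vTS, if_neg (by linarith), vTS, if_pos le_rfl]
  have part3 : ∀ x, b < x → HasDerivAt v C_D x := by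
    intro x hx
    have hd : HasDerivAt (fun y : ℝ => v b + C_D * (y - b)) C_D x := by
      have h1 := ((((hasDerivAt_id x).sub_const b).const_mul C_D)).const_add (v b)
      simpa using h1
    apply hd.congr_of_eventuallyEq
    filter_upwards [Ioi_mem_nhds hx] with y hy
    exact hKb y hy
  -- part 4 : right derivative at a
  have hderA : HasDerivWithinAt v (-C_U) (Set.Ici a) a := by
    have h1 : HasDerivAt (fun y => Zbar q W (y - a)) (Zfun q W (a - a)) a :=
      TSAux.shift_deriv (TSAux.Zbar_hasDeriv hWm _)
    have h2 : HasDerivWithinAt (fun y => TSAux.Vfun W (y - a)) (W 0) (Set.Ici a) a :=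
      TSAux.shift_derivR (TSAux.VdiffR hWm hWcont)
    have h3 : HasDerivWithinAt (fun y => Zfun q W (y - a)) (q * W 0) (Set.Ici a) a := by
      have h3' : (fun y => Zfun q W (y - a)) = fun y => 1 + q * TSAux.Vfun W (y - a) := rfl
      rw [h3']
      simpa using (h2.const_mul q).const_add 1
    have h4 : HasDerivWithinAt Hf 0 (Set.Ici a) a :=
      TSAux.Hfun_derivR hWnonneg hWzero hWm hm hab hf'int
    have h6 : HasDerivWithinAt u (-C_U * Zfun q W (a - a) + f a / q * (q * W 0)
        - (f a * W 0 + 0)) (Set.Ici a) a := by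
      apply HasDerivWithinAt.sub
      · exact ((h1.hasDerivWithinAt.add_const (psi'0 / q)).const_mul (-C_U)).add
          (h3.const_mul (f a / q))
      · exact (h2.const_mul (f a)).add h4
    have h7 : (-C_U * Zfun q W (a - a) + f a / q * (q * W 0) - (f a * W 0 + 0)) = -C_U := by
      rw [sub_self, TSAux.Zone hWzero le_rfl]
      field_simp
      ring
    rw [h7] at h6
    apply h6.congr_of_eventuallyEq _ (hveq a le_rfl hab)
    have hset : Set.Ico a b ∈ 𝓝[Set.Ici a] a := by
      apply mem_of_superset
        (Filter.inter_mem self_mem_nhdsWithin (mem_nhdsWithin_of_mem_nhds (Iio_mem_nhds hab)))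
      intro y hy
      exact ⟨hy.1, hy.2⟩
    filter_upwards [hset] with y hy
    exact hveq y hy.1 hy.2
  -- right derivative at b
  have hderB : HasDerivWithinAt v C_D (Set.Ici b) b := by
    have hd : HasDerivAt (fun y : ℝ => v b + C_D * (y - b)) C_D b := by
      have h1 := ((((hasDerivAt_id b).sub_const b).const_mul C_D)).const_add (v b)
      simpa using h1
    apply hd.hasDerivWithinAt.congr
    · intro y hy
      rcases eq_or_lt_of_le (Set.mem_Ici.1 hy) with h | h
      · rw [← h]; simp
      · rw [hKb y h]
    · simp
  refine ⟨part1, part2, part3, ?_⟩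
  intro x
  rcases lt_trichotomy x a with hxa | hxa | hxa
  · exact ⟨-C_U, (part1 x hxa).hasDerivWithinAt, by linarith⟩
  · rw [← hxa] at hderA
    exact ⟨-C_U, hderA, by linarith⟩
  · rcases lt_trichotomy x b with hxb | hxb | hxb
    · refine ⟨C_D - (C_D + C_U + phiInt W a x (fun y => f' y + C_U * q)),
        (part2 x hxa hxb).hasDerivWithinAt, ?_⟩
      have := hΛnonneg x ⟨hxa.le, hxb.le⟩
      linarith
    · rw [← hxb] at hderB
      exact ⟨C_D, hderB, le_rfl⟩
    · exact ⟨C_D, (part3 x hxb).hasDerivWithinAt, le_rfl⟩
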